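/- Let g : ℝ → ℝ be continuous on [0,1] with g(0) = g(1). Then the variation of g on [0,1] (eVariationOn g (Set.Icc 0 1)) is at least 2·(sup of g over [0,1] − inf of g over [0,1]). -/

import Mathlib

lemma chain_le (g : ℝ → ℝ) {p q : ℝ} (hp : p ∈ Set.Icc (0:ℝ) 1) (hq : q ∈ Set.Icc (0:ℝ) 1)
    (hpq : p ≤ q) :
    ENNReal.ofReal (|g p - g 0| + |g q - g p| + |g 1 - g q|) ≤
      eVariationOn g (Set.Icc 0 1) := by
  set u : ℕ → ℝ := fun n => if n = 0 then 0 else if n = 1 then p else if n = 2 then q else 1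
  have hu : Monotone u := by
    apply monotone_nat_of_le_succ
    intro n
    match n with
    | 0 => simpa [u] using hp.1
    | 1 => simpa [u] using hpq
    | 2 => simpa [u] using hq.2
    | (n+3) => simp [u]
  have us : ∀ i, u i ∈ Set.Icc (0:ℝ) 1 := by
    intro i
    match i with
    | 0 => simp [u]
    | 1 => simpa [u] using hp
    | 2 => simpa [u] using hq
    | (n+3) => simp [u]
  have h := eVariationOn.sum_le (f := g) (n := 3) hu us
  refine le_trans ?_ h
  have : ∑ i ∈ Finset.range 3, edist (g (u (i + 1))) (g (u i)) =
      ENNReal.ofReal (|g p - g 0|) + ENNReal.ofReal (|g q - g p|) +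
        ENNReal.ofReal (|g 1 - g q|) := by
    simp [Finset.sum_range_succ, u, edist_dist, Real.dist_eq]
  rw [this, ← ENNReal.ofReal_add (abs_nonneg _) (abs_nonneg _),
    ← ENNReal.ofReal_add (by positivity) (abs_nonneg _)]

theorem closed_curve_variation_ge_twice_oscillation
    (g : ℝ → ℝ) (hcont : ContinuousOn g (Set.Icc 0 1)) (hclosed : g 0 = g 1) :
    ENNReal.ofReal (2 * (sSup (g '' Set.Icc 0 1) - sInf (g '' Set.Icc 0 1))) ≤
      eVariationOn g (Set.Icc 0 1) := by
  obtain ⟨a, ha, hamax⟩ := isCompact_Icc.exists_isMaxOn (Set.nonempty_Icc.2 zero_le_one) hcont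
  obtain ⟨b, hb, hbmin⟩ := isCompact_Icc.exists_isMinOn (Set.nonempty_Icc.2 zero_le_one) hcont
  have hSup : sSup (g '' Set.Icc 0 1) = g a := by
    apply IsGreatest.csSup_eq
    exact ⟨Set.mem_image_of_mem g ha, by rintro _ ⟨x, hx, rfl⟩; exact hamax hx⟩
  have hInf : sInf (g '' Set.Icc 0 1) = g b := by
    apply IsLeast.csInf_eq
    exact ⟨Set.mem_image_of_mem g hb, by rintro _ ⟨x, hx, rfl⟩; exact hbmin hx⟩
  rw [hSup, hInf]
  have h0 : (0:ℝ) ∈ Set.Icc (0:ℝ) 1 := by norm_num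
  have hga0 : g 0 ≤ g a := hamax h0
  have hgb0 : g b ≤ g 0 := hbmin h0
  have hga1 : g 1 ≤ g a := hclosed ▸ hga0
  have hgb1 : g b ≤ g 1 := hclosed ▸ hgb0
  rcases le_total a b with hab | hab
  · refine le_trans ?_ (chain_le g ha hb hab)
    apply ENNReal.ofReal_le_ofReal
    rw [abs_of_nonneg (by linarith), abs_of_nonpos (by linarith), abs_of_nonneg (by linarith)]
    linarith
  · refine le_trans ?_ (chain_le g hb ha hab)
    apply ENNReal.ofReal_le_ofReal
    rw [abs_of_nonpos (by linarith), abs_of_nonneg (by linarith), abs_of_nonpos (by linarith)]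
    linarith
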